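/- arXiv:1104.0550 — 2 statements merged into one kernel-verified Lean document; each statement's English description precedes it below -/
import Mathlib

section
/- For a positive rational u = p/q in lowest terms with continued fraction expansion u = [a_0; a_1, ..., a_n] (negative continued fraction with a_0 ≥ 1, a_i > 1 for i ≥ 1), define u^a = [a_0; a_1, ..., a_{n-1}] (with u^a = ∞ interpreted as 1/0 when n = 0) and u^c = [a_0; a_1, ..., a_n - 1], written as fractions p^a/q^a and p^c/q^c. Then u is the mediant of u^a and u^c, i.e., p = p^a + p^c and q = q^a + q^c. -/
def ncf : List ℤ → ℚ
  | [] => 0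
  | [a] => (a : ℚ)
  | a :: b :: l => (a : ℚ) - 1 / ncf (b :: l)

lemma ncf_ge_one : ∀ (l : List ℤ) (h : l ≠ []),
    (∀ x ∈ l.dropLast, 2 ≤ x) → 1 ≤ l.getLast h → 1 ≤ ncf l
  | [a], _, _, hl => by simpa [ncf] using by exact_mod_cast hl
  | a :: b :: l, _, hd, hl => by
    have ih : 1 ≤ ncf (b :: l) :=
      ncf_ge_one (b :: l) (by simp) (fun x hx => hd x (by simpa using Or.inr hx))
        (by simpa [List.getLast_cons] using hl)
    have ha : (2 : ℚ) ≤ a := by exact_mod_cast hd a (by simp)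
    have h1 : 1 / ncf (b :: l) ≤ 1 := by
      rw [div_le_one (by linarith)]; linarith
    show 1 ≤ (a : ℚ) - 1 / ncf (b :: l)
    linarith

lemma step (v : ℚ) (hv : 0 < v) (a : ℤ) :
    ((a : ℚ) - 1 / v).num = a * v.num - v.den ∧
      (((a : ℚ) - 1 / v).den : ℤ) = v.num := by
  have hn : 0 < v.num := Rat.num_pos.mpr hv
  have hcop : Nat.Coprime (a * v.num - (v.den : ℤ)).natAbs v.num.natAbs := by
    have hc : IsCoprime (-(v.den : ℤ)) v.num := ((Int.isCoprime_iff_gcd_eq_one.mpr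
      (by exact_mod_cast v.reduced)).neg_right).symm
    have := hc.add_mul_right_left a
    have h2 : IsCoprime (a * v.num - (v.den : ℤ)) v.num := by
      rwa [sub_eq_add_neg, add_comm]
    exact Int.isCoprime_iff_gcd_eq_one.mp h2
  have hq : ((a : ℚ) - 1 / v) = ((a * v.num - v.den : ℤ) : ℚ) / (v.num : ℚ) := by
    rw [eq_div_iff (by exact_mod_cast hn.ne')]
    have hden : (v.den : ℚ) ≠ 0 := by positivity
    have hv' : (v : ℚ) = (v.num : ℚ) / (v.den : ℚ) := (Rat.num_div_den v).symm
    have hnQ : ((v.num : ℚ)) ≠ 0 := by exact_mod_cast hn.ne'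
    have key : v * (v.den : ℚ) = (v.num : ℚ) := by
      nth_rewrite 1 [← Rat.num_div_den v]
      exact div_mul_cancel₀ _ hden
    have h1v : (1:ℚ)/v = (v.den : ℚ)/(v.num : ℚ) := by
      rw [eq_div_iff hnQ, ← key, one_div, inv_mul_cancel_left₀ hv.ne']
    rw [h1v, sub_mul, div_mul_cancel₀ _ hnQ]
    push_cast
    ring
  rw [hq]
  exact ⟨Rat.num_div_eq_of_coprime hn hcop, Rat.den_div_eq_of_coprime hn hcop⟩

lemma ncf_cons (x : ℤ) (l : List ℤ) (h : l ≠ []) : ncf (x :: l) = (x : ℚ) - 1 / ncf l := by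
  cases l with
  | nil => exact absurd rfl h
  | cons b t => rfl

lemma ncf_pos_of_map (f : ℕ → ℤ) (m : ℕ) (hd : ∀ i < m, 2 ≤ f i) (hl : 1 ≤ f m) :
    0 < ncf ((List.range (m + 1)).map f) := by
  have hx : (List.range (m + 1)).map f = (List.range m).map f ++ [f m] := by
    rw [List.range_succ, List.map_append, List.map_singleton]
  have hne : (List.range (m + 1)).map f ≠ [] := by simp
  have h1 : 1 ≤ ncf ((List.range (m + 1)).map f) := by
    apply ncf_ge_one _ hne
    · intro x hxmem
      rw [hx, List.dropLast_concat] at hxmem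
      obtain ⟨i, hi, rfl⟩ := List.mem_map.mp hxmem
      exact hd i (List.mem_range.mp hi)
    · rw [List.getLast_congr _ _ hx, List.getLast_concat]
      exact hl
      simp
  linarith

/-- `u = [a₀; …, aₙ]` is the mediant of `uᵃ = [a₀; …, a_{n-1}]`
(interpreted as `1/0` when `n = 0`) and `u^c = [a₀; …, aₙ - 1]`:
the numerators and denominators (of the reduced fractions) add. -/
theorem stmt2 (a : ℕ → ℤ) (n : ℕ) (h0 : 1 ≤ a 0)
    (h1 : ∀ i, 1 ≤ i → i ≤ n → 1 < a i) :
    let u := ncf ((List.range (n + 1)).map a)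
    let ua := ncf ((List.range n).map a)
    let uc := ncf ((List.range (n + 1)).map (fun i => if i = n then a i - 1 else a i))
    u.num = (if n = 0 then 1 else ua.num) + uc.num ∧
      (u.den : ℤ) = (if n = 0 then 0 else (ua.den : ℤ)) + (uc.den : ℤ) := by
  induction n generalizing a with
  | zero =>
    intro u ua uc
    simp only [u, ua, uc, List.range_succ, List.range_zero, List.map_cons, List.map_nil, ncf, if_pos rfl]
    simp
    have hc : ((a 0 : ℤ) : ℚ) - 1 = ((a 0 - 1 : ℤ) : ℚ) := by push_cast; ring
    simp only [ncf]
    simp only [Rat.num_intCast, Rat.den_intCast]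
    exact ⟨by omega, trivial⟩
  | succ n ih =>
    intro u ua uc
    set a' : ℕ → ℤ := fun i => a (i + 1) with ha'
    have h0' : 1 ≤ a' 0 := le_of_lt (h1 1 (by omega) (by omega))
    have h1' : ∀ i, 1 ≤ i → i ≤ n → 1 < a' i := fun i hi hin => h1 (i + 1) (by omega) (by omega)
    have IH := ih a' h0' h1'
    simp only at IH
    -- list decompositions
    have hsplit : ∀ f : ℕ → ℤ, ∀ m : ℕ, (List.range (m + 1)).map f
        = f 0 :: (List.range m).map (fun i => f (i + 1)) := by
      intro f m
      rw [List.range_succ_eq_map, List.map_cons, List.map_map]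
      rfl
    -- abbreviations
    set v := ncf ((List.range (n + 1)).map fun i => a (i + 1)) with hvdef
    set va := ncf ((List.range n).map fun i => a (i + 1)) with hvadef
    set vc := ncf ((List.range (n + 1)).map
      fun i => if i = n then a (i + 1) - 1 else a (i + 1)) with hvcdef
    have hvpos : 0 < v := ncf_pos_of_map _ n
      (fun i hi => by have := h1 (i + 1) (by omega) (by omega); omega)
      (by have := h1 (n + 1) (by omega) (by omega); omega)
    have hvcpos : 0 < vc := ncf_pos_of_map _ n
      (fun i hi => by
        have := h1 (i + 1) (by omega) (by omega)
        simp only [Nat.ne_of_lt hi, if_false]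
        omega)
      (by have := h1 (n + 1) (by omega) (by omega); simp only [if_pos rfl]; omega)
    have hu : u = (a 0 : ℚ) - 1 / v := by
      show ncf ((List.range (n + 1 + 1)).map a) = _
      rw [hsplit a (n + 1), ncf_cons _ _ (by simp)]
    have huc : uc = (a 0 : ℚ) - 1 / vc := by
      show ncf ((List.range (n + 1 + 1)).map
        fun i => if i = n + 1 then a i - 1 else a i) = _
      rw [hsplit _ (n + 1), ncf_cons _ _ (by simp)]
      have hf : (fun i => if i + 1 = n + 1 then a (i + 1) - 1 else a (i + 1))
          = (fun i => if i = n then a (i + 1) - 1 else a (i + 1)) := by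
        funext i; simp only [add_left_inj]
      simp only [Nat.succ_ne_zero, if_neg, hf]
      norm_num
      rfl
    obtain ⟨hun, hud⟩ := step v hvpos (a 0)
    obtain ⟨hucn, hucd⟩ := step vc hvcpos (a 0)
    rw [← hu] at hun hud
    rw [← huc] at hucn hucd
    obtain ⟨IHn, IHd⟩ := IH
    simp only [Nat.succ_ne_zero, if_false]
    rcases Nat.eq_zero_or_pos n with hn | hn
    · subst hn
      simp only [if_pos rfl, if_true] at IHn IHd
      have hua : ua = ((a 0 : ℤ) : ℚ) := by
        show ncf ((List.range 1).map a) = _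
        simp [List.range_succ, ncf]
      rw [hun, hud, hucn, hucd, hua, Rat.num_intCast, Rat.den_intCast, IHn, IHd]
      constructor <;> ring
    · obtain ⟨m, rfl⟩ : ∃ m, n = m + 1 := ⟨n - 1, by omega⟩
      simp only [Nat.succ_ne_zero, if_false] at IHn IHd
      have hvapos : 0 < va := ncf_pos_of_map _ m
        (fun i hi => by have := h1 (i + 1) (by omega) (by omega); omega)
        (by have := h1 (m + 1) (by omega) (by omega); omega)
      have hua : ua = (a 0 : ℚ) - 1 / va := by
        show ncf ((List.range (m + 1 + 1)).map a) = _
        rw [hsplit a (m + 1), ncf_cons _ _ (by simp)]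
      obtain ⟨huan, huad⟩ := step va hvapos (a 0)
      rw [← hua] at huan huad
      rw [hun, hud, hucn, hucd, huan, huad, IHn, IHd]
      constructor <;> ring
end

section
/- Define the homological intersection of two rational slopes p/q and r/s (in lowest terms) on a torus by (p/q)·(r/s) = ps - rq. Fix a positive integer n and set e_k = k/n for positive integers k. If n ≠ 1 and k, k' are distinct integers greater than 1 with gcd(k, n) = gcd(k', n) = 1, then the open intervals J_k = (e_k^c, e_k^a) and J_{k'} = (e_{k'}^c, e_{k'}^a) are disjoint, where e_k^a and e_k^c denote the largest rational greater than e_k and the smallest rational less than e_k having an edge in the Farey tessellation to e_k (i.e., the unique rationals a/b with |kb - na| = 1 adjacent to e_k as in the Farey tessellation). -/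
/-- Homological intersection of two rational slopes on the torus:
`(p/q)·(r/s) = ps - rq` for reduced fractions. -/
def qdet (x y : ℚ) : ℤ := x.num * (y.den : ℤ) - y.num * (x.den : ℤ)

set_option maxHeartbeats 1000000 in
lemma key_aux (n k k' : ℕ) (hn : 0 < n) (hn1 : n ≠ 1) (hlt : k < k')
    (hg : Nat.gcd k n = 1) (hg' : Nat.gcd k' n = 1) (ua uc' : ℚ)
    (h2 : (k : ℚ) / n < ua) (h4 : (qdet ((k : ℚ) / n) ua).natAbs = 1)
    (h1' : uc' < (k' : ℚ) / n) (h3' : (qdet uc' ((k' : ℚ) / n)).natAbs = 1) :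
    ua ≤ uc' := by
  have hn0 : (0:ℤ) < (n:ℤ) := by exact_mod_cast hn
  have hnum : ((k:ℚ)/n).num = (k:ℤ) := by
    have := Rat.num_div_eq_of_coprime (a := (k:ℤ)) (b := (n:ℤ)) hn0 (by simpa using hg)
    simpa using this
  have hden : (((k:ℚ)/n).den : ℤ) = (n:ℤ) := by
    have := Rat.den_div_eq_of_coprime (a := (k:ℤ)) (b := (n:ℤ)) hn0 (by simpa using hg)
    simpa using this
  have hnum' : ((k':ℚ)/n).num = (k':ℤ) := by
    have := Rat.num_div_eq_of_coprime (a := (k':ℤ)) (b := (n:ℤ)) hn0 (by simpa using hg')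
    simpa using this
  have hden' : (((k':ℚ)/n).den : ℤ) = (n:ℤ) := by
    have := Rat.den_div_eq_of_coprime (a := (k':ℤ)) (b := (n:ℤ)) hn0 (by simpa using hg')
    simpa using this
  obtain ⟨a, b, ha, hb⟩ : ∃ a b : ℤ, a = ua.num ∧ b = (ua.den:ℤ) := ⟨_, _, rfl, rfl⟩
  obtain ⟨c, d, hc, hd⟩ : ∃ c d : ℤ, c = uc'.num ∧ d = (uc'.den:ℤ) := ⟨_, _, rfl, rfl⟩
  have hbpos : (0:ℤ) < b := hb ▸ Int.natCast_pos.mpr ua.pos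
  have hdpos : (0:ℤ) < d := hd ▸ Int.natCast_pos.mpr uc'.pos
  have hua : (ua : ℚ) = (a : ℚ) / (b : ℚ) := by
    rw [ha, hb]; push_cast; exact (Rat.num_div_den ua).symm
  have huc' : (uc' : ℚ) = (c : ℚ) / (d : ℚ) := by
    rw [hc, hd]; push_cast; exact (Rat.num_div_den uc').symm
  have hbq : (0:ℚ) < (b:ℚ) := by exact_mod_cast hbpos
  have hdq : (0:ℚ) < (d:ℚ) := by exact_mod_cast hdpos
  have hnq : (0:ℚ) < (n:ℚ) := by exact_mod_cast hn
  have hlt1 : (k:ℤ) * b < a * n := by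
    rw [hua] at h2
    have := (div_lt_div_iff₀ hnq hbq).mp h2
    exact_mod_cast this
  have hlt2 : c * n < (k':ℤ) * d := by
    rw [huc'] at h1'
    have := (div_lt_div_iff₀ hdq hnq).mp h1'
    exact_mod_cast this
  have e1 : a * n - (k:ℤ) * b = 1 := by
    have h4' : (qdet ((k : ℚ) / n) ua) = 1 ∨ (qdet ((k : ℚ) / n) ua) = -1 :=
      Int.natAbs_eq_iff.mp h4
    unfold qdet at h4'
    rw [hnum, hden, ← ha, ← hb] at h4'
    rcases h4' with h | h <;> omega
  have e2 : (k':ℤ) * d - c * n = 1 := by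
    have h3'' : (qdet uc' ((k' : ℚ) / n)) = 1 ∨ (qdet uc' ((k' : ℚ) / n)) = -1 :=
      Int.natAbs_eq_iff.mp h3'
    unfold qdet at h3''
    rw [hnum', hden', ← hc, ← hd] at h3''
    rcases h3'' with h | h <;> omega
  have hkk : (k:ℤ) < (k':ℤ) := by exact_mod_cast hlt
  have main : b + d ≤ ((k':ℤ) - (k:ℤ)) * b * d := by
    rcases eq_or_lt_of_le (show (k:ℤ) + 1 ≤ (k':ℤ) by omega) with heq | hgt
    · have hb2 : 2 ≤ b := by
        by_contra hb1
        have hb1' : b = 1 := by omega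
        rw [hb1'] at e1
        have hdvd : (n:ℕ) ∣ k' := by
          have : (n:ℤ) ∣ (k':ℤ) := ⟨a, by linarith [mul_comm a (n:ℤ)]⟩
          exact_mod_cast this
        have h8 : n ∣ Nat.gcd k' n := Nat.dvd_gcd hdvd dvd_rfl
        rw [hg'] at h8
        exact hn1 (Nat.eq_one_of_dvd_one h8)
      have hd2 : 2 ≤ d := by
        by_contra hd1
        have hd1' : d = 1 := by omega
        rw [hd1'] at e2
        have hdvd : (n:ℕ) ∣ k := by
          have : (n:ℤ) ∣ (k:ℤ) := ⟨c, by linarith [mul_comm c (n:ℤ)]⟩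
          exact_mod_cast this
        have h8 : n ∣ Nat.gcd k n := Nat.dvd_gcd hdvd dvd_rfl
        rw [hg] at h8
        exact hn1 (Nat.eq_one_of_dvd_one h8)
      have heq' : (k':ℤ) - (k:ℤ) = 1 := by omega
      rw [heq', one_mul]
      nlinarith
    · have h9 : (2:ℤ) ≤ (k':ℤ) - (k:ℤ) := by omega
      nlinarith [mul_pos hbpos hdpos]
  have h7 : (a * d - c * b) * n = (b + d) - ((k':ℤ) - (k:ℤ)) * b * d := by
    linear_combination d * e1 + b * e2
  have h9 : (a * d - c * b) * n ≤ 0 * n := by rw [h7, zero_mul]; linarith [main]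
  have h10 : a * d ≤ c * b := by linarith [le_of_mul_le_mul_right h9 hn0]
  rw [hua, huc', div_le_div_iff₀ hbq hdq]
  exact_mod_cast h10

/-- for `n ≠ 1`, `e_k = k/n`, and `k ≠ k'` both `> 1` and coprime to `n`,
the intervals of influence `J_k = (e_k^c, e_k^a)` and `J_{k'} = (e_{k'}^c, e_{k'}^a)`
are disjoint.  Here `e_k^a` (resp. `e_k^c`) is characterized as the largest rational
above (resp. smallest rational below) `e_k` having a Farey edge to `e_k`. -/
theorem stmt4 (n k k' : ℕ) (hn : 0 < n) (hn1 : n ≠ 1)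
    (hk : 1 < k) (hk' : 1 < k') (hkk' : k ≠ k')
    (hg : Nat.gcd k n = 1) (hg' : Nat.gcd k' n = 1)
    (ua uc ua' uc' : ℚ)
    (h1 : uc < (k : ℚ) / n) (h2 : (k : ℚ) / n < ua)
    (h3 : (qdet uc ((k : ℚ) / n)).natAbs = 1)
    (h4 : (qdet ((k : ℚ) / n) ua).natAbs = 1)
    (h5 : ∀ x : ℚ, (k : ℚ) / n < x → (qdet ((k : ℚ) / n) x).natAbs = 1 → x ≤ ua)
    (h6 : ∀ x : ℚ, x < (k : ℚ) / n → (qdet x ((k : ℚ) / n)).natAbs = 1 → uc ≤ x)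
    (h1' : uc' < (k' : ℚ) / n) (h2' : (k' : ℚ) / n < ua')
    (h3' : (qdet uc' ((k' : ℚ) / n)).natAbs = 1)
    (h4' : (qdet ((k' : ℚ) / n) ua').natAbs = 1)
    (h5' : ∀ x : ℚ, (k' : ℚ) / n < x → (qdet ((k' : ℚ) / n) x).natAbs = 1 → x ≤ ua')
    (h6' : ∀ x : ℚ, x < (k' : ℚ) / n → (qdet x ((k' : ℚ) / n)).natAbs = 1 → uc' ≤ x) :
    Disjoint (Set.Ioo uc ua) (Set.Ioo uc' ua') := by
  rcases lt_or_gt_of_ne hkk' with hlt | hlt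
  · have hle : ua ≤ uc' := key_aux n k k' hn hn1 hlt hg hg' ua uc' h2 h4 h1' h3'
    rw [Set.disjoint_left]
    rintro x ⟨_, hxa⟩ ⟨hxc', _⟩
    exact absurd (hxa.trans_le hle) (not_lt.mpr hxc'.le)
  · have hle : ua' ≤ uc := key_aux n k' k hn hn1 hlt hg' hg ua' uc h2' h4' h1 h3
    rw [Set.disjoint_left]
    rintro x ⟨hxc, _⟩ ⟨_, hxa'⟩
    exact absurd (hxa'.trans_le hle) (not_lt.mpr hxc.le)
end
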